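/- Let B be a closed subset of ℝⁿ that is σ'-Hölder amenable at x* ∈ B for some σ' ∈ (0,1]: there exist an open neighborhood U of x*, a continuously differentiable mapping G : ℝⁿ → ℝᵐ whose derivative DG is σ'-Hölder continuous, and a closed convex set C ⊆ ℝᵐ such that B ∩ U = {x ∈ U : G(x) ∈ C} and N_C(G(x*)) ∩ ker(DG(x*)ᵀ) = {0}, where N_C(y) = {v ∈ ℝᵐ : ⟨v, z − y⟩ ≤ 0 for all z ∈ C} is the convex normal cone. Then for every closed set A ⊆ ℝⁿ containing x*, every σ ∈ (0, σ'), and every constant c > 0, B is σ-Hölder regular with respect to A at x* with constant c. -/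

import Mathlib

set_option maxHeartbeats 4000000

open Set Metric Filter Topology RealInnerProductSpace
open scoped ENNReal

variable {E : Type*} [NormedAddCommGroup E] [InnerProductSpace ℝ E]

/-- The (possibly set-valued) metric projection onto a set `S`. -/
noncomputable def projSet (S : Set E) (x : E) : Set E :=
  {s | s ∈ S ∧ ‖x - s‖ = Metric.infDist x S}

/-- `B` is `σ`-Hölder regular with respect to `A` at `bs` with constant `c`. -/
def HolderRegular (A B : Set E) (bs : E) (σ c : ℝ) : Prop :=
  ∃ U ∈ nhds bs, ∀ a' ∈ A ∩ U, ∀ b' ∈ projSet B a' ∩ U, ∀ b ∈ B,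
    ‖b - a'‖ ≤ (1 + c) * ‖a' - b'‖ → a' ∈ projSet A b →
    ⟪a' - b', b - b'⟫ ≤ Real.sqrt c * ‖a' - b'‖ ^ (σ + 1) * ‖b - b'‖

lemma taylor_bound {n m : ℕ} {G : EuclideanSpace ℝ (Fin n) → EuclideanSpace ℝ (Fin m)}
    (hG : ContDiff ℝ 1 G) {K σ' : ℝ} (hσ' : 0 < σ') (hK : 0 ≤ K)
    (hHold : ∀ x y, ‖fderiv ℝ G x - fderiv ℝ G y‖ ≤ K * ‖x - y‖ ^ σ')
    (x y : EuclideanSpace ℝ (Fin n)) :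
    ‖G y - G x - fderiv ℝ G x (y - x)‖ ≤ K * ‖y - x‖ ^ σ' * ‖y - x‖ := by
  refine (convex_closedBall x ‖y - x‖).norm_image_sub_le_of_norm_fderiv_le'
    (fun z _ => (hG.differentiable one_ne_zero).differentiableAt) (fun z hz => ?_)
    (mem_closedBall_self (norm_nonneg _)) (by simp [mem_closedBall, dist_eq_norm])
  calc ‖fderiv ℝ G z - fderiv ℝ G x‖ ≤ K * ‖z - x‖ ^ σ' := hHold z x
    _ ≤ K * ‖y - x‖ ^ σ' := by
        have : ‖z - x‖ ≤ ‖y - x‖ := by simpa [mem_closedBall, dist_eq_norm] using hz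
        exact mul_le_mul_of_nonneg_left
          (Real.rpow_le_rpow (norm_nonneg _) this (le_of_lt hσ')) hK

lemma stab {n m : ℕ} {G : EuclideanSpace ℝ (Fin n) → EuclideanSpace ℝ (Fin m)}
    (hG : ContDiff ℝ 1 G) {C : Set (EuclideanSpace ℝ (Fin m))}
    {xs : EuclideanSpace ℝ (Fin n)}
    (hCQ : {v : EuclideanSpace ℝ (Fin m) | ∀ z ∈ C, ⟪v, z - G xs⟫ ≤ 0} ∩
           {v : EuclideanSpace ℝ (Fin m) |
              ContinuousLinearMap.adjoint (fderiv ℝ G xs) v = 0} = {0}) :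
    ∃ κ > (0:ℝ), ∃ δ > (0:ℝ), ∀ y : EuclideanSpace ℝ (Fin n), ‖y - xs‖ ≤ δ →
      ∀ p ∈ C, ‖p - G xs‖ ≤ δ → ∀ w : EuclideanSpace ℝ (Fin m),
      (∀ z ∈ C, ⟪w, z - p⟫ ≤ 0) →
      κ * ‖w‖ ≤ ‖ContinuousLinearMap.adjoint (fderiv ℝ G y) w‖ := by
  by_contra hcon
  push_neg at hcon
  -- build sequences
  have hseq : ∀ k : ℕ, ∃ y : EuclideanSpace ℝ (Fin n), ‖y - xs‖ ≤ 1/(k+1) ∧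
      ∃ p ∈ C, ‖p - G xs‖ ≤ 1/(k+1) ∧ ∃ w : EuclideanSpace ℝ (Fin m),
      (∀ z ∈ C, ⟪w, z - p⟫ ≤ 0) ∧ ‖w‖ = 1 ∧
      ‖ContinuousLinearMap.adjoint (fderiv ℝ G y) w‖ < 1/(k+1) := by
    intro k
    have hk : (0:ℝ) < 1/(k+1) := by positivity
    obtain ⟨y, hy, p, hpC, hp, w, hwcone, hw⟩ := hcon (1/(k+1)) hk (1/(k+1)) hk
    have hw0 : w ≠ 0 := by
      intro h; rw [h] at hw; simp at hw
    refine ⟨y, hy, p, hpC, hp, ‖w‖⁻¹ • w, fun z hz => ?_, ?_, ?_⟩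
    · rw [real_inner_smul_left]
      exact mul_nonpos_of_nonneg_of_nonpos (by positivity) (hwcone z hz)
    · have hwn : (0:ℝ) < ‖w‖ := norm_pos_iff.2 hw0
      rw [norm_smul, Real.norm_eq_abs, abs_of_nonneg (inv_nonneg.2 (norm_nonneg w))]
      field_simp
    · rw [map_smul, norm_smul]
      have hwn : (0:ℝ) < ‖w‖ := norm_pos_iff.2 hw0
      rw [Real.norm_eq_abs, abs_of_nonneg (inv_nonneg.2 (norm_nonneg w))]
      calc ‖w‖⁻¹ * ‖ContinuousLinearMap.adjoint (fderiv ℝ G y) w‖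
          < ‖w‖⁻¹ * (1/(k+1) * ‖w‖) := by
            apply mul_lt_mul_of_pos_left hw (by positivity)
        _ = 1/(k+1) := by field_simp
  choose y hy p hpC hp w hwcone hwnorm hwsmall using hseq
  -- subsequence convergence of w on compact sphere
  have hwsph : ∀ k, w k ∈ sphere (0 : EuclideanSpace ℝ (Fin m)) 1 := by
    intro k; simpa [mem_sphere_iff_norm] using hwnorm k
  obtain ⟨u, husph, φ, hφ, hφtend⟩ :=
    (isCompact_sphere (0 : EuclideanSpace ℝ (Fin m)) 1).tendsto_subseq hwsph
  have hinv : Tendsto (fun k : ℕ => 1/((k:ℝ)+1)) atTop (𝓝 0) :=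
    tendsto_one_div_add_atTop_nhds_zero_nat
  have hφtop : Tendsto φ atTop atTop := hφ.tendsto_atTop
  have hinvφ : Tendsto (fun j : ℕ => 1/((φ j:ℝ)+1)) atTop (𝓝 0) := hinv.comp hφtop
  have hytend : Tendsto (fun j => y (φ j)) atTop (𝓝 xs) := by
    rw [tendsto_iff_norm_sub_tendsto_zero]
    exact squeeze_zero (fun j => norm_nonneg _) (fun j => hy (φ j)) hinvφ
  have hptend : Tendsto (fun j => p (φ j)) atTop (𝓝 (G xs)) := by
    rw [tendsto_iff_norm_sub_tendsto_zero]
    exact squeeze_zero (fun j => norm_nonneg _) (fun j => hp (φ j)) hinvφ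
  have hutend : Tendsto (fun j => w (φ j)) atTop (𝓝 u) := hφtend
  -- u in normal cone at G xs
  have hucone : ∀ z ∈ C, ⟪u, z - G xs⟫ ≤ 0 := by
    intro z hz
    have h1 : Tendsto (fun j => ⟪w (φ j), z - p (φ j)⟫) atTop (𝓝 ⟪u, z - G xs⟫) :=
      hutend.inner (tendsto_const_nhds.sub hptend)
    exact le_of_tendsto h1 (Eventually.of_forall fun j => hwcone (φ j) z hz)
  -- adjoint of fderiv at xs kills u
  have hadj : ContinuousLinearMap.adjoint (fderiv ℝ G xs) u = 0 := by
    have hA : Tendsto (fun j => ContinuousLinearMap.adjoint (fderiv ℝ G (y (φ j))))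
        atTop (𝓝 (ContinuousLinearMap.adjoint (fderiv ℝ G xs))) :=
      ((ContinuousLinearMap.adjoint (𝕜 := ℝ)
        (E := EuclideanSpace ℝ (Fin n)) (F := EuclideanSpace ℝ (Fin m))).continuous.tendsto
         _).comp (((hG.continuous_fderiv one_ne_zero).tendsto _).comp hytend)
    have h2 : Tendsto (fun j => ContinuousLinearMap.adjoint (fderiv ℝ G (y (φ j))) (w (φ j)))
        atTop (𝓝 (ContinuousLinearMap.adjoint (fderiv ℝ G xs) u)) :=
      (isBoundedBilinearMap_apply.continuous.tendsto _).comp (hA.prodMk_nhds hutend)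
    have h3 : Tendsto (fun j => ContinuousLinearMap.adjoint (fderiv ℝ G (y (φ j))) (w (φ j)))
        atTop (𝓝 0) := by
      rw [tendsto_zero_iff_norm_tendsto_zero]
      exact squeeze_zero (fun j => norm_nonneg _) (fun j => le_of_lt (hwsmall (φ j))) hinvφ
    exact tendsto_nhds_unique h2 h3
  have hu0 : u = 0 := by
    have : u ∈ ({0} : Set (EuclideanSpace ℝ (Fin m))) := by
      rw [← hCQ]; exact ⟨hucone, hadj⟩
    simpa using this
  rw [hu0] at husph
  simp at husph

lemma errBound {n m : ℕ} {G : EuclideanSpace ℝ (Fin n) → EuclideanSpace ℝ (Fin m)}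
    (hG : ContDiff ℝ 1 G) {K σ' : ℝ} (hσ' : 0 < σ') (hK : 0 ≤ K)
    (hHold : ∀ x y, ‖fderiv ℝ G x - fderiv ℝ G y‖ ≤ K * ‖x - y‖ ^ σ')
    {C : Set (EuclideanSpace ℝ (Fin m))} (hCc : IsClosed C) (hCvx : Convex ℝ C)
    {xs : EuclideanSpace ℝ (Fin n)} (hGxs : G xs ∈ C)
    {U : Set (EuclideanSpace ℝ (Fin n))} (hUo : IsOpen U) (hxU : xs ∈ U)
    {B : Set (EuclideanSpace ℝ (Fin n))} (hxsB : xs ∈ B)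
    (hrep : B ∩ U = {x ∈ U | G x ∈ C})
    (hCQ : {v : EuclideanSpace ℝ (Fin m) | ∀ z ∈ C, ⟪v, z - G xs⟫ ≤ 0} ∩
           {v : EuclideanSpace ℝ (Fin m) |
              ContinuousLinearMap.adjoint (fderiv ℝ G xs) v = 0} = {0}) :
    ∃ L > (0:ℝ), ∃ δ > (0:ℝ), closedBall xs δ ⊆ U ∧
      ∀ x₀, ‖x₀ - xs‖ ≤ δ → infDist x₀ B ≤ L * infDist (G x₀) C := by
  obtain ⟨κ₀, hκ₀, δ₁, hδ₁, hstab₀⟩ := stab hG hCQ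
  set κ := min κ₀ 1 with hκdef
  have hκ : 0 < κ := lt_min hκ₀ one_pos
  have hκ1 : κ ≤ 1 := min_le_right _ _
  have hstab : ∀ y : EuclideanSpace ℝ (Fin n), ‖y - xs‖ ≤ δ₁ →
      ∀ p ∈ C, ‖p - G xs‖ ≤ δ₁ → ∀ w : EuclideanSpace ℝ (Fin m),
      (∀ z ∈ C, ⟪w, z - p⟫ ≤ 0) →
      κ * ‖w‖ ≤ ‖ContinuousLinearMap.adjoint (fderiv ℝ G y) w‖ := by
    intro y hy p hp hp' w hw
    exact le_trans (mul_le_mul_of_nonneg_right (min_le_left _ _) (norm_nonneg _))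
      (hstab₀ y hy p hp hp' w hw)
  -- choose a radius around xs inside U
  obtain ⟨δU, hδU, hδUsub⟩ : ∃ δU > (0:ℝ), closedBall xs δU ⊆ U := by
    obtain ⟨r, hr, hsub⟩ := Metric.isOpen_iff.1 hUo xs hxU
    refine ⟨r/2, by positivity, fun z hz => hsub ?_⟩
    simp only [mem_closedBall] at hz
    exact mem_ball.2 (by linarith)
  -- continuity of G at xs
  obtain ⟨δG, hδG, hGsub⟩ : ∃ δG > (0:ℝ), ∀ z : EuclideanSpace ℝ (Fin n),
      ‖z - xs‖ ≤ δG → ‖G z - G xs‖ ≤ δ₁/2 := by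
    have := Metric.continuousAt_iff.1 (hG.continuous.continuousAt (x := xs)) (δ₁/2) (by positivity)
    obtain ⟨d, hd, hball⟩ := this
    refine ⟨d/2, by positivity, fun z hz => ?_⟩
    have h1 : dist z xs < d := by
      rw [dist_eq_norm]
      linarith
    have h2 := hball h1
    rw [dist_eq_norm] at h2
    linarith
  set δ := min (min (δU/2) (δ₁/2)) (δG/2) with hδdef
  have hδpos : 0 < δ := lt_min (lt_min (by positivity) (by positivity)) (by positivity)
  have hδU2 : 2*δ ≤ δU := by
    have := le_trans (min_le_left (min (δU/2) (δ₁/2)) (δG/2)) (min_le_left _ _); linarith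
  have hδ12 : 2*δ ≤ δ₁ := by
    have := le_trans (min_le_left (min (δU/2) (δ₁/2)) (δG/2)) (min_le_right _ _); linarith
  have hδG2 : 2*δ ≤ δG := by
    have := min_le_right (min (δU/2) (δ₁/2)) (δG/2); linarith
  have hδUsub2 : closedBall xs δ ⊆ U := by
    intro z hz
    apply hδUsub
    simp only [mem_closedBall] at hz ⊢
    linarith
  refine ⟨2/κ, by positivity, δ, hδpos, hδUsub2, ?_⟩
  intro x₀ hx₀
  by_cases hbig : κ*δ/2 ≤ infDist (G x₀) C
  · have h1 : infDist x₀ B ≤ δ := by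
      refine le_trans (infDist_le_dist_of_mem hxsB) ?_
      rw [dist_eq_norm]; exact hx₀
    calc infDist x₀ B ≤ δ := h1
      _ = (2/κ) * (κ*δ/2) := by field_simp
      _ ≤ (2/κ) * infDist (G x₀) C := by
          apply mul_le_mul_of_nonneg_left hbig (by positivity)
  · push_neg at hbig
    set ε := κ/2 with hεdef
    set φ : EuclideanSpace ℝ (Fin n) → ℝ := fun x => infDist (G x) C + ε * ‖x - x₀‖ with hφdef
    have hφc : Continuous φ := by
      apply Continuous.add
      · exact (continuous_infDist_pt C).comp hG.continuous
      · exact continuous_const.mul ((continuous_id.sub continuous_const).norm)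
    obtain ⟨y, hyK, hymin⟩ := (isCompact_closedBall x₀ δ).exists_isMinOn
      ⟨x₀, mem_closedBall_self hδpos.le⟩ hφc.continuousOn
    have hφy : φ y ≤ infDist (G x₀) C := by
      have := hymin (mem_closedBall_self hδpos.le)
      simpa [hφdef] using this
    have hyx₀ : ε * ‖y - x₀‖ ≤ infDist (G x₀) C := by
      have h0 : (0:ℝ) ≤ infDist (G y) C := infDist_nonneg
      simp only [hφdef] at hφy; linarith
    have hyx₀' : ‖y - x₀‖ < δ := by
      have h2 : ε * ‖y - x₀‖ < κ*δ/2 := lt_of_le_of_lt hyx₀ hbig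
      rw [hεdef] at h2
      nlinarith [norm_nonneg (y - x₀)]
    have hyxs : ‖y - xs‖ ≤ 2*δ := by
      calc ‖y - xs‖ ≤ ‖y - x₀‖ + ‖x₀ - xs‖ := norm_sub_le_norm_sub_add_norm_sub _ _ _
        _ ≤ 2*δ := by linarith
    have hyU : y ∈ U := hδUsub (by simp only [mem_closedBall, dist_eq_norm]; linarith)
    have hGyC : G y ∈ C := by
      by_contra hnot
      set d := infDist (G y) C with hddef
      have hd : 0 < d := by
        rcases lt_or_eq_of_le (infDist_nonneg (s := C) (x := G y)) with h | h
        · exact h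
        · exact absurd ((hCc.mem_iff_infDist_zero ⟨G xs, hGxs⟩).2 h.symm) hnot
      obtain ⟨p, hpC, hpd⟩ := hCc.exists_infDist_eq_dist ⟨G xs, hGxs⟩ (G y)
      set w₀ := G y - p with hw₀def
      have hw₀ : ‖w₀‖ = d := by rw [hw₀def, ← dist_eq_norm, ← hpd]
      have hcone : ∀ z ∈ C, ⟪w₀, z - p⟫ ≤ 0 := by
        have hiInf : ‖G y - p‖ = ⨅ w : C, ‖G y - w‖ := by
          rw [← dist_eq_norm, ← hpd, infDist_eq_iInf]
          simp_rw [dist_eq_norm]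
        exact (norm_eq_iInf_iff_real_inner_le_zero hCvx hpC).1 hiInf
      have hdle : d ≤ infDist (G x₀) C := by
        have h0 : (0:ℝ) ≤ ε * ‖y - x₀‖ := by positivity
        simp only [hφdef] at hφy; linarith
      have hpnear : ‖p - G xs‖ ≤ δ₁ := by
        have h1 : ‖p - G xs‖ ≤ ‖p - G y‖ + ‖G y - G xs‖ := norm_sub_le_norm_sub_add_norm_sub _ _ _
        have h2 : ‖p - G y‖ = d := by rw [norm_sub_rev]; exact hw₀
        have h3 : ‖G y - G xs‖ ≤ δ₁/2 := hGsub y (le_trans hyxs (by linarith))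
        have h4 : d < κ*δ/2 := lt_of_le_of_lt hdle hbig
        nlinarith
      set A := fderiv ℝ G y with hAdef
      -- first order condition
      have hfo : ∀ h : EuclideanSpace ℝ (Fin n), 0 ≤ ⟪w₀, A h⟫/d + ε * ‖h‖ := by
        intro h
        set ts := (δ - ‖y - x₀‖)/(‖h‖+1) with htsdef
        have hts : 0 < ts := by
          apply div_pos (by linarith) (by positivity)
        have key : ∀ t : ℝ, 0 < t → t ≤ ts →
            0 ≤ ⟪w₀, A h⟫/d + t*‖A h‖^2/(2*d) + K * t^σ' * ‖h‖^σ' * ‖h‖ + ε*‖h‖ := by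
          intro t ht hts'
          have hmem : y + t • h ∈ closedBall x₀ δ := by
            simp only [mem_closedBall, dist_eq_norm]
            have h1 : ‖y + t • h - x₀‖ ≤ ‖y - x₀‖ + t * ‖h‖ := by
              calc ‖y + t • h - x₀‖ = ‖(y - x₀) + t • h‖ := by rw [add_sub_right_comm]
                _ ≤ ‖y - x₀‖ + ‖t • h‖ := norm_add_le _ _
                _ = ‖y - x₀‖ + t * ‖h‖ := by rw [norm_smul, Real.norm_eq_abs, abs_of_pos ht]
            have h2 : t * ‖h‖ ≤ δ - ‖y - x₀‖ := by
              calc t * ‖h‖ ≤ ts * ‖h‖ := mul_le_mul_of_nonneg_right hts' (norm_nonneg _)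
                _ = (δ - ‖y - x₀‖) * (‖h‖/(‖h‖+1)) := by rw [htsdef]; ring
                _ ≤ (δ - ‖y - x₀‖) * 1 := by
                    apply mul_le_mul_of_nonneg_left _ (by linarith)
                    rw [div_le_one (by positivity)]; linarith
                _ = δ - ‖y - x₀‖ := mul_one _
            linarith
          have hmin := hymin hmem
          simp only [hφdef] at hmin
          -- Taylor estimate
          have hR : ‖G (y + t • h) - G y - A (t • h)‖ ≤ K * t^σ' * ‖h‖^σ' * (t * ‖h‖) := by
            have := taylor_bound hG hσ' hK hHold y (y + t • h)
            have he : y + t • h - y = t • h := by abel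
            rw [he] at this
            have hn : ‖t • h‖ = t * ‖h‖ := by
              rw [norm_smul, Real.norm_eq_abs, abs_of_pos ht]
            rw [hn] at this
            calc ‖G (y + t • h) - G y - A (t • h)‖ ≤ K * (t*‖h‖)^σ' * (t*‖h‖) := this
              _ = K * t^σ' * ‖h‖^σ' * (t * ‖h‖) := by
                  rw [Real.mul_rpow ht.le (norm_nonneg _)]; ring
          -- distance bound
          have hq : infDist (G (y + t • h)) C ≤ ‖w₀ + t • A h‖ + K * t^σ' * ‖h‖^σ' * (t * ‖h‖) := by
            calc infDist (G (y + t • h)) C ≤ ‖G (y + t • h) - p‖ := by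
                  rw [← dist_eq_norm]; exact infDist_le_dist_of_mem hpC
              _ = ‖(w₀ + t • A h) + (G (y + t • h) - G y - A (t • h))‖ := by
                  rw [hw₀def]; congr 1
                  rw [map_smul]; abel
              _ ≤ ‖w₀ + t • A h‖ + ‖G (y + t • h) - G y - A (t • h)‖ := norm_add_le _ _
              _ ≤ _ := by linarith [hR]
          -- square-root bound for ‖w₀ + t • A h‖
          have hns : ‖w₀ + t • A h‖ ≤ d + t*⟪w₀, A h⟫/d + t^2*‖A h‖^2/(2*d) := by
            have hexp : ‖w₀ + t • A h‖^2 = d^2 + 2*t*⟪w₀, A h⟫ + t^2*‖A h‖^2 := by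
              rw [norm_add_sq_real, hw₀, real_inner_smul_right, norm_smul, Real.norm_eq_abs,
                abs_of_pos ht, mul_pow]
              ring
            set S := d + t*⟪w₀, A h⟫/d + t^2*‖A h‖^2/(2*d) with hSdef
            have hIcs : |⟪w₀, A h⟫| ≤ d * ‖A h‖ := by
              have := abs_real_inner_le_norm w₀ (A h)
              rwa [hw₀] at this
            have hIlo : -(d * ‖A h‖) ≤ ⟪w₀, A h⟫ := neg_le_of_abs_le hIcs
            have hSpos : 0 < S := by
              have hexpand : S * (2*d) = 2*d^2 + 2*t*⟪w₀, A h⟫ + t^2*‖A h‖^2 := by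
                rw [hSdef]; field_simp
              have hmul := mul_le_mul_of_nonneg_left hIlo (by positivity : (0:ℝ) ≤ 2*t)
              have h2 : 0 < S * (2*d) := by nlinarith [sq_nonneg (d - t*‖A h‖)]
              nlinarith [h2, hd]
            have hdiff : S^2 - ‖w₀ + t • A h‖^2
                = (t*⟪w₀, A h⟫/d + t^2*‖A h‖^2/(2*d))^2 := by
              rw [hexp, hSdef]
              field_simp
              ring
            have hsq : ‖w₀ + t • A h‖^2 ≤ S^2 := by
              have hY := sq_nonneg (t*⟪w₀, A h⟫/d + t^2*‖A h‖^2/(2*d))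
              rw [← hdiff] at hY
              linarith
            nlinarith [norm_nonneg (w₀ + t • A h), hSpos, hsq]
          -- norm increment of the penalty term
          have hpen : ‖y + t • h - x₀‖ ≤ ‖y - x₀‖ + t * ‖h‖ := by
            calc ‖y + t • h - x₀‖ = ‖(y - x₀) + t • h‖ := by rw [add_sub_right_comm]
              _ ≤ ‖y - x₀‖ + ‖t • h‖ := norm_add_le _ _
              _ = ‖y - x₀‖ + t * ‖h‖ := by rw [norm_smul, Real.norm_eq_abs, abs_of_pos ht]
          -- combine
          have hcomb : d + ε * ‖y - x₀‖ ≤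
              d + t*⟪w₀, A h⟫/d + t^2*‖A h‖^2/(2*d) + K * t^σ' * ‖h‖^σ' * (t * ‖h‖)
              + ε * (‖y - x₀‖ + t * ‖h‖) := by
            calc d + ε * ‖y - x₀‖ = φ y := by simp [hφdef, hddef]
              _ ≤ φ (y + t • h) := hmin
              _ = infDist (G (y + t • h)) C + ε * ‖y + t • h - x₀‖ := rfl
              _ ≤ ‖w₀ + t • A h‖ + K * t^σ' * ‖h‖^σ' * (t * ‖h‖) + ε * (‖y - x₀‖ + t * ‖h‖) := by
                  have := mul_le_mul_of_nonneg_left hpen (le_of_lt (by positivity : (0:ℝ) < ε))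
                  linarith
              _ ≤ _ := by linarith
          have hdiv : 0 ≤ t*(⟪w₀, A h⟫/d + t*‖A h‖^2/(2*d) + K * t^σ' * ‖h‖^σ' * ‖h‖ + ε*‖h‖) := by
            have : 0 ≤ t*⟪w₀, A h⟫/d + t^2*‖A h‖^2/(2*d) + K * t^σ' * ‖h‖^σ' * (t * ‖h‖)
              + ε * (t * ‖h‖) := by linarith
            calc (0:ℝ) ≤ t*⟪w₀, A h⟫/d + t^2*‖A h‖^2/(2*d) + K * t^σ' * ‖h‖^σ' * (t * ‖h‖)
              + ε * (t * ‖h‖) := this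
              _ = t*(⟪w₀, A h⟫/d + t*‖A h‖^2/(2*d) + K * t^σ' * ‖h‖^σ' * ‖h‖ + ε*‖h‖) := by ring
          exact nonneg_of_mul_nonneg_right hdiv ht
        -- take the limit t → 0⁺
        have hlim : Tendsto (fun t : ℝ => ⟪w₀, A h⟫/d + t*‖A h‖^2/(2*d) + K * t^σ' * ‖h‖^σ' * ‖h‖
            + ε*‖h‖) (𝓝[>] (0:ℝ)) (𝓝 (⟪w₀, A h⟫/d + 0*‖A h‖^2/(2*d) + K * 0 * ‖h‖^σ' * ‖h‖ + ε*‖h‖)) := by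
          apply Tendsto.mono_left _ nhdsWithin_le_nhds
          have hrpow : Tendsto (fun t : ℝ => t^σ') (𝓝 0) (𝓝 0) := by
            have := (Real.continuousAt_rpow_const 0 σ' (Or.inr hσ'.le))
            have h0 : (0:ℝ)^σ' = 0 := Real.zero_rpow (ne_of_gt hσ')
            simpa [ContinuousAt, h0] using this
          apply Tendsto.add
          apply Tendsto.add
          apply Tendsto.add
          · exact tendsto_const_nhds
          · exact ((tendsto_id.mul tendsto_const_nhds).div_const _)
          · exact (((tendsto_const_nhds.mul hrpow).mul tendsto_const_nhds).mul tendsto_const_nhds)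
          · exact tendsto_const_nhds
        have hev : ∀ᶠ t in 𝓝[>] (0:ℝ), 0 ≤ ⟪w₀, A h⟫/d + t*‖A h‖^2/(2*d)
            + K * t^σ' * ‖h‖^σ' * ‖h‖ + ε*‖h‖ := by
          filter_upwards [Ioc_mem_nhdsGT hts] with t ht
          exact key t ht.1 ht.2
        have := ge_of_tendsto hlim hev
        simpa using this
      -- apply with h = -(adjoint A w₀)
      set u := ContinuousLinearMap.adjoint A w₀ with hudef
      have hAw := hfo (-u)
      have hinner : ⟪w₀, A (-u)⟫ = -‖u‖^2 := by
        rw [map_neg, inner_neg_right, hudef]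
        rw [← ContinuousLinearMap.adjoint_inner_left A]
        rw [real_inner_self_eq_norm_sq]
      rw [hinner, norm_neg] at hAw
      have hstab' : κ * d ≤ ‖u‖ := by
        have := hstab y (by linarith) p hpC hpnear w₀ hcone
        rwa [hw₀] at this
      have hεval : ε = κ/2 := rfl
      have h3 : ‖u‖^2/d ≤ ε*‖u‖ := by
        have h3a := hAw
        rw [neg_div] at h3a
        linarith
      have h4 : ‖u‖^2 ≤ ε*‖u‖*d := by
        rw [div_le_iff₀ hd] at h3; linarith
      have h5 : 0 < ‖u‖ := lt_of_lt_of_le (by positivity : (0:ℝ) < κ*d) hstab'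
      rw [hεval] at h4
      nlinarith [mul_le_mul_of_nonneg_right hstab' h5.le, h4, hd, hκ, h5]
    -- G y ∈ C, hence y ∈ B
    have hyB : y ∈ B := by
      have hmemy : y ∈ {x | x ∈ U ∧ G x ∈ C} := ⟨hyU, hGyC⟩
      rw [← hrep] at hmemy
      exact hmemy.1
    calc infDist x₀ B ≤ dist x₀ y := infDist_le_dist_of_mem hyB
      _ = ‖y - x₀‖ := by rw [dist_eq_norm, norm_sub_rev]
      _ ≤ (2/κ) * infDist (G x₀) C := by
          have h1 := mul_le_mul_of_nonneg_left hyx₀ (le_of_lt (by positivity : (0:ℝ) < 2/κ))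
          have h2 : (2/κ) * (ε * ‖y - x₀‖) = ‖y - x₀‖ := by
            rw [hεdef]; field_simp
          linarith [h1, h2.symm.le]

theorem stmt10 {n m : ℕ} (B : Set (EuclideanSpace ℝ (Fin n))) (hBne : B.Nonempty)
    (hBc : IsClosed B) (xs : EuclideanSpace ℝ (Fin n)) (hxsB : xs ∈ B)
    (σ' : ℝ) (hσ' : σ' ∈ Set.Ioc (0:ℝ) 1)
    (U : Set (EuclideanSpace ℝ (Fin n))) (hUo : IsOpen U) (hxU : xs ∈ U)
    (G : EuclideanSpace ℝ (Fin n) → EuclideanSpace ℝ (Fin m))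
    (hG : ContDiff ℝ 1 G)
    (K : ℝ) (hHold : ∀ x y : EuclideanSpace ℝ (Fin n),
      ‖fderiv ℝ G x - fderiv ℝ G y‖ ≤ K * ‖x - y‖ ^ σ')
    (C : Set (EuclideanSpace ℝ (Fin m))) (hCc : IsClosed C) (hCvx : Convex ℝ C)
    (hGxs : G xs ∈ C)
    (hrep : B ∩ U = {x ∈ U | G x ∈ C})
    (hCQ : {v : EuclideanSpace ℝ (Fin m) | ∀ z ∈ C, ⟪v, z - G xs⟫ ≤ 0} ∩
           {v : EuclideanSpace ℝ (Fin m) |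
              ContinuousLinearMap.adjoint (fderiv ℝ G xs) v = 0} = {0}) :
    ∀ A : Set (EuclideanSpace ℝ (Fin n)), IsClosed A → xs ∈ A →
      ∀ σ : ℝ, 0 < σ → σ < σ' → ∀ c : ℝ, 0 < c → HolderRegular A B xs σ c := by
  intro A hAc hxsA σ hσ hσσ' c hc
  obtain ⟨hσ'0, hσ'1⟩ := hσ'
  set K₀ := max K 0 with hK₀def
  have hK₀ : 0 ≤ K₀ := le_max_right _ _
  have hHold₀ : ∀ x y : EuclideanSpace ℝ (Fin n),
      ‖fderiv ℝ G x - fderiv ℝ G y‖ ≤ K₀ * ‖x - y‖ ^ σ' := fun x y =>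
    le_trans (hHold x y) (mul_le_mul_of_nonneg_right (le_max_left _ _)
      (Real.rpow_nonneg (norm_nonneg _) _))
  obtain ⟨L, hL, δ₂, hδ₂, hUsub, herr⟩ :=
    errBound hG hσ'0 hK₀ hHold₀ hCc hCvx hGxs hUo hxU hxsB hrep hCQ
  set M := 2*L*K₀*(2+c)^σ' with hMdef
  have hM : 0 ≤ M := by
    have : (0:ℝ) ≤ (2+c)^σ' := Real.rpow_nonneg (by linarith) _
    positivity
  set e := σ' - σ with hedef
  have he : 0 < e := by simp [hedef]; linarith
  have hsqrtc : 0 < Real.sqrt c := Real.sqrt_pos.2 hc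
  set ρ := min (δ₂/(3+c)) ((Real.sqrt c/(M+1))^(e⁻¹)) with hρdef
  have hρpos : 0 < ρ := lt_min (by positivity)
    (Real.rpow_pos_of_pos (by positivity) _)
  have hρe : M * ρ^e ≤ Real.sqrt c := by
    have h1 : ρ^e ≤ ((Real.sqrt c/(M+1))^(e⁻¹))^e :=
      Real.rpow_le_rpow hρpos.le (min_le_right _ _) he.le
    have h2 : ((Real.sqrt c/(M+1))^(e⁻¹))^e = Real.sqrt c/(M+1) := by
      rw [← Real.rpow_mul (by positivity), inv_mul_cancel₀ (ne_of_gt he), Real.rpow_one]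
    have h3 : ρ^e ≤ Real.sqrt c/(M+1) := h2 ▸ h1
    calc M * ρ^e ≤ M * (Real.sqrt c/(M+1)) :=
          mul_le_mul_of_nonneg_left h3 hM
      _ = Real.sqrt c * (M/(M+1)) := by ring
      _ ≤ Real.sqrt c * 1 := by
          apply mul_le_mul_of_nonneg_left _ hsqrtc.le
          rw [div_le_one (by positivity)]; linarith
      _ = Real.sqrt c := mul_one _
  have hρδ : (3+c)*ρ ≤ δ₂ := by
    have h1 : ρ ≤ δ₂/(3+c) := min_le_left _ _
    rw [le_div_iff₀ (by positivity)] at h1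
    linarith
  refine ⟨ball xs ρ, ball_mem_nhds _ hρpos, ?_⟩
  rintro a' ⟨ha'A, ha'U⟩ b' ⟨⟨hb'B, hb'eq⟩, hb'U⟩ b hbB hble _
  rw [mem_ball, dist_eq_norm] at ha'U hb'U
  set r := ‖a' - b'‖ with hrdef
  have hrρ : r < ρ := by
    have h1 : infDist a' B ≤ dist a' xs := infDist_le_dist_of_mem hxsB
    rw [dist_eq_norm] at h1
    calc r = infDist a' B := hb'eq
      _ ≤ ‖a' - xs‖ := h1
      _ < ρ := ha'U
  rcases eq_or_lt_of_le (norm_nonneg (a' - b')) with hr0 | hr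
  · -- r = 0 case
    have ha'b' : a' - b' = 0 := norm_eq_zero.1 hr0.symm
    have hrz : r = 0 := by rw [hrdef, ← hr0]
    rw [ha'b', inner_zero_left, hrz,
      Real.zero_rpow (ne_of_gt (by linarith : (0:ℝ) < σ + 1))]
    simp
  · -- r > 0 case
    set u := b - b' with hudef
    have hu : ‖u‖ ≤ (2+c)*r := by
      have h1 : ‖u‖ ≤ ‖b - a'‖ + ‖a' - b'‖ := by
        calc ‖u‖ = ‖(b - a') + (a' - b')‖ := by rw [hudef]; congr 1; abel
          _ ≤ ‖b - a'‖ + ‖a' - b'‖ := norm_add_le _ _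
      linarith
  -- b and b' lie well inside the ball where the error bound applies
    have hbxs : ‖b - xs‖ ≤ (2+c)*ρ := by
      have h1 : ‖b - xs‖ ≤ ‖b - a'‖ + ‖a' - xs‖ := norm_sub_le_norm_sub_add_norm_sub _ _ _
      have h2 : (1+c)*r ≤ (1+c)*ρ := mul_le_mul_of_nonneg_left hrρ.le (by linarith)
      linarith
    have hρδ₂ : ρ ≤ δ₂ := by nlinarith
    have hbU : b ∈ U := by
      apply hUsub
      rw [mem_closedBall, dist_eq_norm]
      nlinarith
    have hb'U2 : b' ∈ U := by
      apply hUsub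
      rw [mem_closedBall, dist_eq_norm]
      linarith
    have hGb : G b ∈ C := by
      have : b ∈ {x | x ∈ U ∧ G x ∈ C} := by rw [← hrep]; exact ⟨hbB, hbU⟩
      exact this.2
    have hGb' : G b' ∈ C := by
      have : b' ∈ {x | x ∈ U ∧ G x ∈ C} := by rw [← hrep]; exact ⟨hb'B, hb'U2⟩
      exact this.2
    set ε' := 2*L*K₀*‖u‖^σ'*‖u‖ with hε'def
    have hε'0 : 0 ≤ ε' := by
      have : (0:ℝ) ≤ ‖u‖^σ' := Real.rpow_nonneg (norm_nonneg _) _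
      positivity
    set A' := fderiv ℝ G b' with hA'def
    -- the key step estimate
    have hstep : ∀ t : ℝ, 0 < t → t ≤ 1 → t*ε' ≤ r →
        ⟪a' - b', u⟫ ≤ r*ε' + t*‖u‖^2/2 := by
      intro t ht ht1 htε
      set z := b' + t • u with hzdef
      have hzxs : ‖z - xs‖ ≤ δ₂ := by
        have h1 : ‖z - xs‖ ≤ ‖b' - xs‖ + t*‖u‖ := by
          calc ‖z - xs‖ = ‖(b' - xs) + t • u‖ := by rw [hzdef, add_sub_right_comm]
            _ ≤ ‖b' - xs‖ + ‖t • u‖ := norm_add_le _ _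
            _ = ‖b' - xs‖ + t*‖u‖ := by rw [norm_smul, Real.norm_eq_abs, abs_of_pos ht]
        have h2 : t*‖u‖ ≤ (2+c)*r := by
          calc t*‖u‖ ≤ 1*‖u‖ := mul_le_mul_of_nonneg_right ht1 (norm_nonneg _)
            _ = ‖u‖ := one_mul _
            _ ≤ (2+c)*r := hu
        nlinarith
      set q := G b' + t • (G b - G b') with hqdef
      have hqC : q ∈ C := by
        have h1 := hCvx hGb' hGb (by linarith : (0:ℝ) ≤ 1 - t) ht.le (by ring)
        have h2 : (1-t) • (G b') + t • (G b) = q := by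
          rw [hqdef]; module
        rwa [h2] at h1
      have hTay1 : ‖G z - G b' - A' (t • u)‖ ≤ K₀*(t*‖u‖)^σ'*(t*‖u‖) := by
        have h0 := taylor_bound hG hσ'0 hK₀ hHold₀ b' z
        have h1 : z - b' = t • u := by rw [hzdef]; abel
        rw [h1] at h0
        have h2 : ‖t • u‖ = t*‖u‖ := by rw [norm_smul, Real.norm_eq_abs, abs_of_pos ht]
        rwa [h2] at h0
      have hTay2 : ‖G b - G b' - A' u‖ ≤ K₀*‖u‖^σ'*‖u‖ := by
        have h0 := taylor_bound hG hσ'0 hK₀ hHold₀ b' b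
        rwa [← hudef] at h0
      have hGzq : ‖G z - q‖ ≤ t*(2*K₀*‖u‖^σ'*‖u‖) := by
        have hid : G z - q = (G z - G b' - A' (t • u)) - t • (G b - G b' - A' u) := by
          rw [hqdef, map_smul]
          module
        have h1 : ‖G z - q‖ ≤ ‖G z - G b' - A' (t • u)‖ + ‖t • (G b - G b' - A' u)‖ := by
          rw [hid]; exact norm_sub_le _ _
        have h2 : ‖t • (G b - G b' - A' u)‖ = t*‖G b - G b' - A' u‖ := by
          rw [norm_smul, Real.norm_eq_abs, abs_of_pos ht]
        have h3 : (t*‖u‖)^σ' ≤ ‖u‖^σ' := by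
          apply Real.rpow_le_rpow (by positivity) _ hσ'0.le
          nlinarith [norm_nonneg u]
        have h4 : K₀*(t*‖u‖)^σ'*(t*‖u‖) ≤ t*(K₀*‖u‖^σ'*‖u‖) := by
          have h5 : K₀*(t*‖u‖)^σ'*(t*‖u‖) ≤ K₀*‖u‖^σ'*(t*‖u‖) := by
            apply mul_le_mul_of_nonneg_right _ (by positivity)
            exact mul_le_mul_of_nonneg_left h3 hK₀
          calc K₀*(t*‖u‖)^σ'*(t*‖u‖) ≤ K₀*‖u‖^σ'*(t*‖u‖) := h5
            _ = t*(K₀*‖u‖^σ'*‖u‖) := by ring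
        have h6 : t*‖G b - G b' - A' u‖ ≤ t*(K₀*‖u‖^σ'*‖u‖) :=
          mul_le_mul_of_nonneg_left hTay2 ht.le
        calc ‖G z - q‖ ≤ ‖G z - G b' - A' (t • u)‖ + t*‖G b - G b' - A' u‖ := by
              rw [← h2]; exact h1
          _ ≤ K₀*(t*‖u‖)^σ'*(t*‖u‖) + t*(K₀*‖u‖^σ'*‖u‖) := add_le_add hTay1 h6
          _ ≤ t*(K₀*‖u‖^σ'*‖u‖) + t*(K₀*‖u‖^σ'*‖u‖) := by linarith
          _ = t*(2*K₀*‖u‖^σ'*‖u‖) := by ring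
      have hinf : infDist z B ≤ t*ε' := by
        have h1 : infDist (G z) C ≤ ‖G z - q‖ := by
          rw [← dist_eq_norm]; exact infDist_le_dist_of_mem hqC
        have h2 := herr z hzxs
        calc infDist z B ≤ L * infDist (G z) C := h2
          _ ≤ L * (t*(2*K₀*‖u‖^σ'*‖u‖)) :=
              mul_le_mul_of_nonneg_left (le_trans h1 hGzq) hL.le
          _ = t*ε' := by rw [hε'def]; ring
      obtain ⟨x', hx'B, hx'd⟩ := hBc.exists_infDist_eq_dist hBne z
      have hr1 : r ≤ ‖a' - x'‖ := by
        rw [hb'eq, ← dist_eq_norm]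
        exact infDist_le_dist_of_mem hx'B
      have hr2 : ‖a' - x'‖ ≤ ‖(a' - b') - t • u‖ + t*ε' := by
        have h1 : ‖a' - x'‖ ≤ ‖a' - z‖ + ‖z - x'‖ := norm_sub_le_norm_sub_add_norm_sub _ _ _
        have h2 : a' - z = (a' - b') - t • u := by rw [hzdef]; abel
        have h3 : ‖z - x'‖ ≤ t*ε' := by
          rw [← dist_eq_norm, ← hx'd]; exact hinf
        rw [h2] at h1; linarith
      have hlow : r - t*ε' ≤ ‖(a' - b') - t • u‖ := by linarith
      have hsqexp : ‖(a' - b') - t • u‖^2 = r^2 - 2*t*⟪a' - b', u⟫ + t^2*‖u‖^2 := by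
        rw [norm_sub_sq_real, real_inner_smul_right, norm_smul, Real.norm_eq_abs,
          abs_of_pos ht, mul_pow, ← hrdef]
        ring
      have hsq2 : (r - t*ε')^2 ≤ ‖(a' - b') - t • u‖^2 := by
        have := mul_self_le_mul_self (by linarith) hlow
        simpa [sq] using this
      rw [hsqexp] at hsq2
      have hmul : t*(2*⟪a' - b', u⟫) ≤ t*(2*r*ε' + t*‖u‖^2) := by
        nlinarith [sq_nonneg (t*ε')]
      have := le_of_mul_le_mul_left hmul ht
      linarith
    -- pass to the limit t → 0⁺
    have hkey : ⟪a' - b', u⟫ ≤ r*ε' := by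
      apply le_of_forall_pos_le_add
      intro η hη
      set t := min (min 1 (r/(ε'+1))) (2*η/(‖u‖^2+1)) with htdef
      have ht : 0 < t := lt_min (lt_min one_pos (by positivity)) (by positivity)
      have ht1 : t ≤ 1 := le_trans (min_le_left _ _) (min_le_left _ _)
      have htr : t*ε' ≤ r := by
        have h1 : t ≤ r/(ε'+1) := le_trans (min_le_left _ _) (min_le_right _ _)
        rw [le_div_iff₀ (by positivity)] at h1
        nlinarith
      have hη2 : t*‖u‖^2/2 ≤ η := by
        have h1 : t ≤ 2*η/(‖u‖^2+1) := min_le_right _ _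
        rw [le_div_iff₀ (by positivity)] at h1
        nlinarith [sq_nonneg ‖u‖]
      have := hstep t ht ht1 htr
      linarith
    -- final computation
    have hfinal : r*ε' ≤ Real.sqrt c * r^(σ+1) * ‖u‖ := by
      have h1 : ‖u‖^σ' ≤ ((2+c)*r)^σ' :=
        Real.rpow_le_rpow (norm_nonneg _) hu hσ'0.le
      have h2 : ((2+c)*r)^σ' = (2+c)^σ' * r^σ' :=
        Real.mul_rpow (by linarith) (by positivity)
      have h3 : r^σ' = r^σ * r^e := by
        rw [← Real.rpow_add hr, hedef]; ring_nf; rfl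
      have h4 : r^e ≤ ρ^e := Real.rpow_le_rpow (by positivity) hrρ.le he.le
      have h5 : r^(σ+1) = r^σ * r := by
        rw [Real.rpow_add hr, Real.rpow_one]
      have hrσ : (0:ℝ) ≤ r^σ := Real.rpow_nonneg (by positivity) _
      have h6 : ‖u‖^σ' ≤ (2+c)^σ' * (r^σ * r^e) := by
        rw [← h3, ← h2]; exact h1
      calc r*ε' = 2*L*K₀*‖u‖^σ' * (r * ‖u‖) := by rw [hε'def]; ring
        _ ≤ 2*L*K₀*((2+c)^σ' * (r^σ * r^e)) * (r * ‖u‖) :=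
            mul_le_mul_of_nonneg_right
              (mul_le_mul_of_nonneg_left h6 (by positivity)) (by positivity)
        _ = (M * r^e) * (r^σ * r * ‖u‖) := by rw [hMdef]; ring
        _ ≤ (M * ρ^e) * (r^σ * r * ‖u‖) :=
            mul_le_mul_of_nonneg_right
              (mul_le_mul_of_nonneg_left h4 hM) (by positivity)
        _ ≤ Real.sqrt c * (r^σ * r * ‖u‖) :=
            mul_le_mul_of_nonneg_right hρe (by positivity)
        _ = Real.sqrt c * r^(σ+1) * ‖u‖ := by rw [h5]; ring
    calc ⟪a' - b', b - b'⟫ = ⟪a' - b', u⟫ := by rw [hudef]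
      _ ≤ r*ε' := hkey
      _ ≤ Real.sqrt c * r^(σ+1) * ‖u‖ := hfinal
      _ = Real.sqrt c * ‖a' - b'‖^(σ+1) * ‖b - b'‖ := by rw [hrdef, hudef]
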